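/- Let X_1,…,X_n be independent Bernoulli random variables with parameter p ∈ (0,1], let S_n = Σ_{i=1}^n X_i, p̂ = S_n/n, and Z = 1{S_n > 0}/p̂ − 1/p (with 1{S_n>0}/p̂ = 0 when S_n = 0). If np ≥ 34, then E[Z] ≤ (2/p) · √(2/(np)) · ( √((3/2) ln(np/2)) + 1 ). -/

import Mathlib

open MeasureTheory ENNReal

noncomputable section

namespace BernoulliInvMoment

/-- The Bernoulli(p) distribution on `Bool`: `true` with probability `p`,
`false` with probability `1 − p`. -/
def bern (p : ℝ) : Measure Bool :=
  (Real.toNNReal p) • Measure.dirac true + (Real.toNNReal (1 - p)) • Measure.dirac false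

instance bern_finite (p : ℝ) : IsFiniteMeasure (bern p) := by
  unfold bern; infer_instance

/-- The distribution of `n` independent Bernoulli(p) random variables. -/
def bernData (n : ℕ) (p : ℝ) : Measure (Fin n → Bool) :=
  Measure.pi fun _ => bern p

/-- `S_n`: the number of successes. -/
def bcount (n : ℕ) (d : Fin n → Bool) : ℕ :=
  (Finset.univ.filter fun i => d i = true).card


lemma bern_singleton (p : ℝ) (hp0 : 0 ≤ p) (hp1 : p ≤ 1) (b : Bool) :
    bern p {b} = ENNReal.ofReal (if b then p else 1 - p) := by
  cases b <;>
    simp [bern, Measure.dirac_apply, ENNReal.ofReal, Measure.smul_apply, -ENNReal.smul_def]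

lemma bernData_singleton (n : ℕ) (p : ℝ) (hp0 : 0 ≤ p) (hp1 : p ≤ 1) (d : Fin n → Bool) :
    bernData n p {d} = ENNReal.ofReal (p ^ bcount n d * (1 - p) ^ (n - bcount n d)) := by
  have hq0 : (0:ℝ) ≤ 1 - p := by linarith
  rw [bernData, ← Set.univ_pi_singleton, Measure.pi_pi]
  have : ∀ i : Fin n, bern p {d i} = ENNReal.ofReal (if d i then p else 1 - p) :=
    fun i => bern_singleton p hp0 hp1 (d i)
  simp_rw [this, apply_ite ENNReal.ofReal]
  rw [Finset.prod_ite (fun _ => ENNReal.ofReal p) (fun _ => ENNReal.ofReal (1-p))]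
  rw [Finset.prod_const, Finset.prod_const]
  have hcard : (Finset.univ.filter fun i : Fin n => ¬ d i = true).card = n - bcount n d := by
    have h := Finset.card_filter_add_card_filter_not (s := (Finset.univ : Finset (Fin n)))
      (fun i => d i = true)
    have h2 : bcount n d + (Finset.univ.filter fun i : Fin n => ¬ d i = true).card = n := by
      simpa [bcount] using h
    omega
  rw [ENNReal.ofReal_mul (by positivity), ENNReal.ofReal_pow hp0, ENNReal.ofReal_pow hq0]
  rw [hcard]
  rfl

lemma bcount_le (n : ℕ) (d : Fin n → Bool) : bcount n d ≤ n := by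
  have := Finset.card_filter_le (Finset.univ : Finset (Fin n)) (fun i => d i = true)
  simpa [bcount] using this

lemma card_bcount (n s : ℕ) :
    (Finset.univ.filter fun d : Fin n → Bool => bcount n d = s).card = n.choose s := by
  have h := Finset.card_powersetCard s (Finset.univ : Finset (Fin n))
  rw [Finset.card_univ, Fintype.card_fin] at h
  rw [← h]
  apply Finset.card_bij' (fun d _ => Finset.univ.filter fun i => d i = true)
    (fun t _ => fun i => decide (i ∈ t))
  · intro d _
    funext i
    simp
  · intro t _
    ext i
    simp
  · intro d hd
    rw [Finset.mem_filter] at hd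
    rw [Finset.mem_powersetCard]
    exact ⟨Finset.subset_univ _, hd.2⟩
  · intro t ht
    rw [Finset.mem_powersetCard] at ht
    rw [Finset.mem_filter]
    refine ⟨Finset.mem_univ _, ?_⟩
    rw [bcount, ← ht.2]
    congr 1
    ext i
    simp

lemma integral_bcount (n : ℕ) (p : ℝ) (hp0 : 0 ≤ p) (hp1 : p ≤ 1) (f : ℕ → ℝ) :
    ∫ d, f (bcount n d) ∂ bernData n p
      = ∑ s ∈ Finset.range (n+1), (n.choose s : ℝ) * (p ^ s * (1 - p) ^ (n - s) * f s) := by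
  have hq0 : (0:ℝ) ≤ 1 - p := by linarith
  have hfin : IsFiniteMeasure (bernData n p) := by unfold bernData; infer_instance
  rw [MeasureTheory.integral_fintype (Integrable.of_finite)]
  simp_rw [measureReal_def, bernData_singleton n p hp0 hp1, smul_eq_mul,
    ENNReal.toReal_ofReal (by positivity : (0:ℝ) ≤ p ^ _ * (1-p) ^ _)]
  have key := Finset.sum_fiberwise_of_maps_to (s := (Finset.univ : Finset (Fin n → Bool)))
    (t := Finset.range (n+1)) (g := fun d => bcount n d)
    (fun d _ => Finset.mem_range.mpr (Nat.lt_succ_of_le (bcount_le n d)))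
    (fun d => p ^ bcount n d * (1 - p) ^ (n - bcount n d) * f (bcount n d))
  rw [← key]
  refine Finset.sum_congr rfl fun s hs => ?_
  rw [Finset.sum_congr rfl (fun d hd => ?_), Finset.sum_const, card_bcount, nsmul_eq_mul]
  · rw [Finset.mem_filter] at hd
    rw [hd.2]

lemma choose_shift_sum_le (n m : ℕ) (p : ℝ) (hp : 0 < p) (hp1 : p ≤ 1) :
    ∑ s ∈ Finset.range (n+1), ((n+m).choose (s+m) : ℝ) * (p ^ s * (1 - p) ^ (n - s))
      ≤ 1 / p ^ m := by
  have hq0 : (0:ℝ) ≤ 1 - p := by linarith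
  rw [le_div_iff₀ (by positivity)]
  rw [Finset.sum_mul]
  have h1 : ∀ s ∈ Finset.range (n+1),
      ((n+m).choose (s+m) : ℝ) * (p ^ s * (1 - p) ^ (n - s)) * p ^ m
        = (fun k => p ^ k * (1-p) ^ (n+m-k) * ((n+m).choose k : ℝ)) (m + s) := by
    intro s hs
    rw [Finset.mem_range] at hs
    have hns : n + m - (m + s) = n - s := by omega
    simp only
    rw [hns, Nat.add_comm m s, pow_add]
    ring
  have hr : n + 1 = n + 1 + m - m := by omega
  rw [Finset.sum_congr rfl h1, hr, ← Finset.sum_Ico_eq_sum_range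
    (fun k => p ^ k * (1-p) ^ (n+m-k) * ((n+m).choose k : ℝ)) m (n+1+m)]
  have h3 : ∑ k ∈ Finset.Ico m (n+1+m), p ^ k * (1-p) ^ (n+m-k) * ((n+m).choose k : ℝ)
      ≤ ∑ k ∈ Finset.range (n+m+1), p ^ k * (1-p) ^ (n+m-k) * ((n+m).choose k : ℝ) := by
    apply Finset.sum_le_sum_of_subset_of_nonneg
    · rw [Finset.range_eq_Ico]
      exact Finset.Ico_subset_Ico (Nat.zero_le m) (by omega)
    · intro k _ _
      have : (0:ℝ) ≤ (1-p)^(n+m-k) := pow_nonneg hq0 _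
      positivity
  refine h3.trans ?_
  rw [← add_pow p (1-p) (n+m)]
  norm_num

lemma choose1 (n s : ℕ) : (n.choose s : ℝ) * (n+1) = ((n+1).choose (s+1) : ℝ) * (s+1) := by
  have h := Nat.add_one_mul_choose_eq n s
  exact_mod_cast by rw [Nat.mul_comm] at h; exact h

lemma choose2 (n s : ℕ) :
    (n.choose s : ℝ) * ((n+1)*(n+2)) = ((n+2).choose (s+2) : ℝ) * ((s+1)*(s+2)) := by
  have h1 := Nat.add_one_mul_choose_eq n s
  have h2 := Nat.add_one_mul_choose_eq (n+1) (s+1)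
  have hN : n.choose s * ((n+1)*(n+2)) = (n+2).choose (s+2) * ((s+1)*(s+2)) := by
    calc n.choose s * ((n+1)*(n+2)) = ((n+1) * n.choose s) * (n+2) := by ring
    _ = ((n+1).choose (s+1) * (s+1)) * (n+2) := by rw [h1]
    _ = ((n+1+1) * (n+1).choose (s+1)) * (s+1) := by ring
    _ = ((n+1+1).choose (s+1+1) * (s+1+1)) * (s+1) := by rw [h2]
    _ = _ := by ring_nf
  exact_mod_cast hN

lemma EZ_bound (n : ℕ) (hn : 1 ≤ n) (p : ℝ) (hp : 0 < p) (hp1 : p ≤ 1) :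
    (∫ d, ((if 0 < bcount n d then (n : ℝ) / (bcount n d : ℝ) else 0) - 1 / p)
        ∂(bernData n p)) ≤ 3 / (n * p^2) := by
  have hq0 : (0:ℝ) ≤ 1 - p := by linarith
  rw [integral_bcount n p hp.le hp1 (fun s => (if 0 < s then (n : ℝ) / (s : ℝ) else 0) - 1/p)]
  have hterm : ∀ s ∈ Finset.range (n+1),
      (n.choose s : ℝ) * (p ^ s * (1-p) ^ (n-s) * ((if 0 < s then (n : ℝ) / (s : ℝ) else 0) - 1/p))
      ≤ ((n:ℝ)/(n+1)) * (((n+1).choose (s+1) : ℝ) * (p ^ s * (1-p) ^ (n-s)))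
        + (3*(n:ℝ)/((n+1)*(n+2))) * (((n+2).choose (s+2) : ℝ) * (p ^ s * (1-p) ^ (n-s)))
        - (1/p) * ((n.choose s : ℝ) * (p ^ s * (1-p) ^ (n-s))) := by
    intro s _
    set W : ℝ := p ^ s * (1-p) ^ (n-s) with hW
    have hW0 : 0 ≤ W := by positivity
    have hg : (if 0 < s then (n : ℝ) / (s : ℝ) else 0)
        ≤ (n:ℝ)/(s+1) + 3*(n:ℝ)/((s+1)*(s+2)) := by
      by_cases hs : 0 < s
      · rw [if_pos hs]
        have hs1 : (1:ℝ) ≤ (s:ℝ) := by exact_mod_cast hs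
        rw [div_add_div _ _ (by positivity) (by positivity), div_le_div_iff₀ (by linarith)
          (by positivity)]
        have hn0 : (0:ℝ) ≤ (n:ℝ) := Nat.cast_nonneg n
        nlinarith [mul_nonneg hn0 (by linarith : (0:ℝ) ≤ (s:ℝ) - 1), sq_nonneg ((s:ℝ))]
      · rw [if_neg hs]
        positivity
    have e1 : (n.choose s : ℝ) * W * ((n:ℝ)/(s+1))
        = ((n:ℝ)/(n+1)) * (((n+1).choose (s+1) : ℝ) * W) := by
      have h := choose1 n s
      field_simp
      linear_combination W * h
    have e2 : (n.choose s : ℝ) * W * (3*(n:ℝ)/((s+1)*(s+2)))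
        = (3*(n:ℝ)/((n+1)*(n+2))) * (((n+2).choose (s+2) : ℝ) * W) := by
      have h := choose2 n s
      field_simp
      linear_combination W * h
    have hCW : 0 ≤ (n.choose s : ℝ) * W := by positivity
    have := mul_le_mul_of_nonneg_left hg hCW
    calc (n.choose s : ℝ) * (W * ((if 0 < s then (n : ℝ) / (s : ℝ) else 0) - 1/p))
        = (n.choose s : ℝ) * W * (if 0 < s then (n : ℝ) / (s : ℝ) else 0)
          - (1/p) * ((n.choose s : ℝ) * W) := by ring
      _ ≤ (n.choose s : ℝ) * W * ((n:ℝ)/(s+1) + 3*(n:ℝ)/((s+1)*(s+2)))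
          - (1/p) * ((n.choose s : ℝ) * W) := by
            have := mul_le_mul_of_nonneg_left hg hCW
            linarith
      _ = (n.choose s : ℝ) * W * ((n:ℝ)/(s+1)) + (n.choose s : ℝ) * W * (3*(n:ℝ)/((s+1)*(s+2)))
          - (1/p) * ((n.choose s : ℝ) * W) := by ring
      _ = _ := by rw [e1, e2]
  refine (Finset.sum_le_sum hterm).trans ?_
  rw [Finset.sum_sub_distrib, Finset.sum_add_distrib, ← Finset.mul_sum, ← Finset.mul_sum,
    ← Finset.mul_sum]
  have hA : ∑ s ∈ Finset.range (n+1), (n.choose s : ℝ) * (p ^ s * (1-p) ^ (n-s)) = 1 := by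
    have : ∀ s ∈ Finset.range (n+1),
        (n.choose s : ℝ) * (p ^ s * (1-p) ^ (n-s)) = p ^ s * (1-p) ^ (n-s) * (n.choose s : ℝ) :=
      fun s _ => by ring
    rw [Finset.sum_congr rfl this, ← add_pow p (1-p) n]
    norm_num
  have hB : ∑ s ∈ Finset.range (n+1), ((n+1).choose (s+1) : ℝ) * (p ^ s * (1-p) ^ (n-s))
      ≤ 1 / p := by
    have := choose_shift_sum_le n 1 p hp hp1
    simpa using this
  have hC : ∑ s ∈ Finset.range (n+1), ((n+2).choose (s+2) : ℝ) * (p ^ s * (1-p) ^ (n-s))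
      ≤ 1 / p ^ 2 := choose_shift_sum_le n 2 p hp hp1
  rw [hA]
  have hN1 : (1:ℝ) ≤ (n:ℝ) := by exact_mod_cast hn
  have hc1 : (0:ℝ) ≤ (n:ℝ)/((n:ℝ)+1) := by positivity
  have hc2 : (0:ℝ) ≤ 3*(n:ℝ)/(((n:ℝ)+1)*((n:ℝ)+2)) := by positivity
  have t1 : ((n:ℝ)/((n:ℝ)+1)) * ∑ s ∈ Finset.range (n+1),
      ((n+1).choose (s+1) : ℝ) * (p ^ s * (1-p) ^ (n-s)) ≤ ((n:ℝ)/((n:ℝ)+1)) * (1/p) :=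
    mul_le_mul_of_nonneg_left hB hc1
  have t2 : (3*(n:ℝ)/(((n:ℝ)+1)*((n:ℝ)+2))) * ∑ s ∈ Finset.range (n+1),
      ((n+2).choose (s+2) : ℝ) * (p ^ s * (1-p) ^ (n-s))
      ≤ (3*(n:ℝ)/(((n:ℝ)+1)*((n:ℝ)+2))) * (1/p^2) :=
    mul_le_mul_of_nonneg_left hC hc2
  have u1 : ((n:ℝ)/((n:ℝ)+1)) * (1/p) ≤ 1/p := by
    rw [div_mul_div_comm, mul_one, div_le_div_iff₀ (by positivity) hp]
    nlinarith
  have u2 : (3*(n:ℝ)/(((n:ℝ)+1)*((n:ℝ)+2))) * (1/p^2) ≤ 3 / ((n:ℝ) * p^2) := by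
    rw [div_mul_div_comm, mul_one, div_le_div_iff₀ (by positivity) (by positivity)]
    nlinarith [sq_nonneg p, mul_pos hp hp]
  linarith


/-- Lemma 1, second part: with `S_n = Σ X_i`, `p̂ = S_n/n` and
`Z = 1{S_n>0}/p̂ − 1/p` (so `1{S_n>0}/p̂ = n/S_n`, interpreted as `0` when `S_n = 0`),
if `np ≥ 34` then `E[Z] ≤ (2/p)·√(2/(np))·(√((3/2)·ln(np/2)) + 1)`. -/
theorem expectation_Z_refined_bound (n : ℕ) (hn : 1 ≤ n)
    (p : ℝ) (hp : 0 < p) (hp1 : p ≤ 1) (h34 : (34 : ℝ) ≤ (n : ℝ) * p) :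
    (∫ d, ((if 0 < bcount n d then (n : ℝ) / (bcount n d : ℝ) else 0) - 1 / p)
        ∂(bernData n p)) ≤
      (2 / p) * Real.sqrt (2 / ((n : ℝ) * p)) *
        (Real.sqrt ((3 / 2) * Real.log ((n : ℝ) * p / 2)) + 1) := by
  have ht0 : (0:ℝ) < (n:ℝ)*p := lt_of_lt_of_le (by norm_num) h34
  have hn0 : (0:ℝ) < (n:ℝ) := by positivity
  set a := Real.sqrt (2/((n:ℝ)*p)) with hadef
  have ha : 0 ≤ a := Real.sqrt_nonneg _
  have ha2 : a^2 = 2/((n:ℝ)*p) := Real.sq_sqrt (by positivity)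
  have h8 : a^2 * ((n:ℝ)*p) = 2 := by rw [ha2]; field_simp
  have key : 3 ≤ 2*a*((n:ℝ)*p) := by
    nlinarith [ha, h34, h8, sq_nonneg (a*((n:ℝ)*p)), sq_nonneg (2*a*((n:ℝ)*p) - 3)]
  have step : 3/((n:ℝ)*p^2) ≤ (2/p) * a := by
    rw [div_le_iff₀ (by positivity)]
    have e : (2/p)*a*((n:ℝ)*p^2) = 2*a*((n:ℝ)*p) := by field_simp
    rw [e]
    exact key
  refine (EZ_bound n hn p hp hp1).trans (step.trans ?_)
  have h1 : (1:ℝ) ≤ Real.sqrt ((3 / 2) * Real.log ((n : ℝ) * p / 2)) + 1 := by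
    have := Real.sqrt_nonneg ((3 / 2) * Real.log ((n : ℝ) * p / 2))
    linarith
  exact le_mul_of_one_le_right (by positivity) h1

end BernoulliInvMoment
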